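/- Let P be a polytope in ℝ^N given as the convex hull of a finite set V of vertices, and let Q ⊆ rint(P) be a subset of the relative interior of P. Then rint(P) ⊆ co(Q) if and only if every vertex v ∈ V lies in the closure of Q. -/

import Mathlib

open Set Metric
variable {E : Type*} [NormedAddCommGroup E] [NormedSpace ℝ E]

theorem mem_rint_iff {s : Set E} {x : E} :
    x ∈ intrinsicInterior ℝ s ↔ x ∈ affineSpan ℝ s ∧
      ∃ ε > 0, ∀ y ∈ affineSpan ℝ s, dist y x < ε → y ∈ s := by
  rw [mem_intrinsicInterior]
  constructor
  · rintro ⟨y, hy, rfl⟩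
    refine ⟨y.2, ?_⟩
    rw [mem_interior_iff_mem_nhds, Metric.mem_nhds_iff] at hy
    obtain ⟨ε, hε, hball⟩ := hy
    refine ⟨ε, hε, fun z hz hdz => ?_⟩
    have : (⟨z, hz⟩ : affineSpan ℝ s) ∈ Metric.ball y ε := by
      rw [Metric.mem_ball, Subtype.dist_eq]
      exact hdz
    exact hball this
  · rintro ⟨hx, ε, hε, h⟩
    refine ⟨⟨x, hx⟩, ?_, rfl⟩
    rw [mem_interior_iff_mem_nhds, Metric.mem_nhds_iff]
    refine ⟨ε, hε, fun y hy => ?_⟩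
    rw [Metric.mem_ball, Subtype.dist_eq] at hy
    exact h y y.2 hy

theorem add_smul_sub_mem_span {s : Set E} {a b c : E} (ha : a ∈ affineSpan ℝ s)
    (hb : b ∈ affineSpan ℝ s) (hc : c ∈ affineSpan ℝ s) (r : ℝ) :
    a + r • (b - c) ∈ affineSpan ℝ s := by
  have key := AffineSubspace.smul_vsub_vadd_mem (affineSpan ℝ s) r hb hc ha
  have heq : r • (b -ᵥ c) +ᵥ a = a + r • (b - c) := by
    simp only [vsub_eq_sub, vadd_eq_add]; abel
  rwa [heq] at key

theorem combo_mem_rint {s : Set E} (hs : Convex ℝ s) {x y : E} (hx : x ∈ s)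
    (hy : y ∈ intrinsicInterior ℝ s) {t : ℝ} (ht0 : 0 < t) (ht1 : t ≤ 1) :
    (1 - t) • x + t • y ∈ intrinsicInterior ℝ s := by
  rw [mem_rint_iff] at hy ⊢
  obtain ⟨hyspan, ε, hε, hball⟩ := hy
  have hxspan : x ∈ affineSpan ℝ s := subset_affineSpan ℝ s hx
  set w := (1 - t) • x + t • y with hw
  have hwspan : w ∈ affineSpan ℝ s := by
    have := add_smul_sub_mem_span hxspan hyspan hxspan t
    rw [hw]; convert this using 1; module
  refine ⟨hwspan, t * ε, by positivity, fun z hz hdz => ?_⟩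
  set y' := y + (1 / t) • (z - w) with hy'
  have hy'span : y' ∈ affineSpan ℝ s := add_smul_sub_mem_span hyspan hz hwspan (1 / t)
  have hy'dist : dist y' y < ε := by
    rw [hy', dist_eq_norm]
    simp only [add_sub_cancel_left, norm_smul]
    rw [Real.norm_eq_abs, abs_of_pos (by positivity : (0:ℝ) < 1 / t)]
    rw [dist_eq_norm] at hdz
    calc 1 / t * ‖z - w‖ < 1 / t * (t * ε) := by
          apply mul_lt_mul_of_pos_left hdz (by positivity)
      _ = ε := by field_simp
  have hy's : y' ∈ s := hball y' hy'span hy'dist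
  have hz_eq : z = (1 - t) • x + t • y' := by
    rw [hy', smul_add, smul_smul, mul_one_div, div_self ht0.ne', one_smul, hw]
    abel
  rw [hz_eq]
  exact hs hx hy's (by linarith) ht0.le (by ring)

theorem rint_subset_of_dense [FiniteDimensional ℝ E] {C s : Set E} (hC : Convex ℝ C)
    (hCs : C ⊆ s) (hsC : s ⊆ closure C) : intrinsicInterior ℝ s ⊆ C := by
  intro x hx
  have hxs : x ∈ s := intrinsicInterior_subset hx
  have hCne : C.Nonempty := by
    rw [← closure_nonempty_iff]; exact ⟨x, hsC hxs⟩
  obtain ⟨y, hy⟩ := hCne.intrinsicInterior hC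
  have hspan : affineSpan ℝ C = affineSpan ℝ s := by
    refine le_antisymm (affineSpan_mono ℝ hCs) (affineSpan_le.2 ?_)
    calc s ⊆ closure C := hsC
      _ ⊆ closure (affineSpan ℝ C : Set E) := closure_mono (subset_affineSpan ℝ C)
      _ = (affineSpan ℝ C : Set E) :=
          (affineSpan ℝ C).closed_of_finiteDimensional.closure_eq
  rw [mem_rint_iff] at hx hy
  obtain ⟨hxspan, ε, hε, hballs⟩ := hx
  obtain ⟨hyspanC, δ, hδ, hballC⟩ := hy
  have hyspan : y ∈ affineSpan ℝ s := hspan ▸ hyspanC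
  rcases eq_or_ne x y with rfl | hne
  · exact hballC x hyspanC (by simpa using hδ)
  -- choose t > 0 small, z := x + t • (x - y) ∈ s
  have hd : 0 < dist x y := dist_pos.2 hne
  set t : ℝ := min (ε / (2 * dist x y)) 1 with htdef
  have ht0 : 0 < t := lt_min (by positivity) one_pos
  set z := x + t • (x - y) with hz
  have hzspan : z ∈ affineSpan ℝ s := add_smul_sub_mem_span hxspan hxspan hyspan t
  have hzdist : dist z x < ε := by
    rw [hz, dist_eq_norm, add_sub_cancel_left, norm_smul, Real.norm_eq_abs, abs_of_pos ht0]
    have h1 : t ≤ ε / (2 * dist x y) := min_le_left _ _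
    have : ‖x - y‖ = dist x y := (dist_eq_norm x y).symm
    rw [this]
    calc t * dist x y ≤ ε / (2 * dist x y) * dist x y := by
          exact mul_le_mul_of_nonneg_right h1 dist_nonneg
      _ = ε / 2 := by field_simp
      _ < ε := by linarith
  have hzs : z ∈ s := hballs z hzspan hzdist
  have hzclC : z ∈ closure C := hsC hzs
  -- x = a • y + b • z with a = t/(1+t), b = 1/(1+t)
  set a : ℝ := t / (1 + t) with ha
  set b : ℝ := 1 / (1 + t) with hb
  have h1t : (0:ℝ) < 1 + t := by linarith
  have hab : a + b = 1 := by rw [ha, hb]; field_simp; ring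
  have ha0 : 0 < a := by positivity
  have hb0 : 0 < b := by positivity
  -- pick c ∈ C close to z
  obtain ⟨c, hcC, hcz⟩ : ∃ c ∈ C, dist z c < t * δ := by
    rw [Metric.mem_closure_iff] at hzclC
    exact hzclC (t * δ) (by positivity)
  set y' := y + (b / a) • (z - c) with hy'
  have hcspan : c ∈ affineSpan ℝ C := subset_affineSpan ℝ C hcC
  have hzspanC : z ∈ affineSpan ℝ C := hspan ▸ hzspan
  have hy'span : y' ∈ affineSpan ℝ C := add_smul_sub_mem_span hyspanC hzspanC hcspan (b / a)
  have hba : b / a = 1 / t := by rw [ha, hb]; field_simp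
  have hy'dist : dist y' y < δ := by
    rw [hy', dist_eq_norm, add_sub_cancel_left, norm_smul, hba, Real.norm_eq_abs,
      abs_of_pos (by positivity : (0:ℝ) < 1 / t)]
    rw [dist_eq_norm] at hcz
    calc 1 / t * ‖z - c‖ < 1 / t * (t * δ) := mul_lt_mul_of_pos_left hcz (by positivity)
      _ = δ := by field_simp
  have hy'C : y' ∈ C := hballC y' hy'span hy'dist
  have ht' : t ≠ 0 := ht0.ne'
  have h1t' : (1:ℝ) + t ≠ 0 := h1t.ne'
  have hx_eq : x = a • y' + b • c := by
    rw [hy', hz, ha, hb]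
    set_option linter.unnecessarySeqFocus false in
    match_scalars <;> field_simp <;> ring
  rw [hx_eq]
  exact hC hy'C hcC ha0.le hb0.le hab

theorem subset_closure_rint [FiniteDimensional ℝ E] {s : Set E} (hs : Convex ℝ s) :
    s ⊆ closure (intrinsicInterior ℝ s) := by
  intro x hx
  obtain ⟨y, hy⟩ := Set.Nonempty.intrinsicInterior hs ⟨x, hx⟩
  have htend : Filter.Tendsto (fun t : ℝ => (1 - t) • x + t • y)
      (nhdsWithin 0 (Set.Ioi 0)) (nhds x) := by
    have hcont : Continuous fun t : ℝ => (1 - t) • x + t • y := by continuity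
    have h0 := hcont.tendsto 0
    norm_num at h0
    exact h0.mono_left nhdsWithin_le_nhds
  refine mem_closure_of_tendsto htend ?_
  filter_upwards [Ioc_mem_nhdsGT_of_mem (Set.left_mem_Ico.2 one_pos)] with t ht
  exact combo_mem_rint hs hx hy ht.1 ht.2

theorem rint_subset_convexHull_iff_vertices_in_closure {N : ℕ}
    (V : Finset (EuclideanSpace ℝ (Fin N)))
    (hV : ∀ v ∈ V, ∃ l : EuclideanSpace ℝ (Fin N) →L[ℝ] ℝ,
      ∀ w ∈ convexHull ℝ (V : Set (EuclideanSpace ℝ (Fin N))), w ≠ v → l w < l v)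
    (Q : Set (EuclideanSpace ℝ (Fin N)))
    (hQ : Q ⊆ intrinsicInterior ℝ (convexHull ℝ (V : Set (EuclideanSpace ℝ (Fin N))))) :
    intrinsicInterior ℝ (convexHull ℝ (V : Set (EuclideanSpace ℝ (Fin N)))) ⊆ convexHull ℝ Q
      ↔ ∀ v ∈ V, v ∈ closure Q := by
  set P := convexHull ℝ (V : Set (EuclideanSpace ℝ (Fin N))) with hP
  have hPconv : Convex ℝ P := convex_convexHull ℝ _
  have hPcomp : IsCompact P := V.finite_toSet.isCompact_convexHull (𝕜 := ℝ)
  constructor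
  · intro h v hv
    have hvP : v ∈ P := subset_convexHull ℝ _ hv
    have hvcl : v ∈ closure (convexHull ℝ Q) :=
      closure_mono h (subset_closure_rint hPconv hvP)
    by_contra hvQ
    rw [Metric.mem_closure_iff] at hvQ
    push_neg at hvQ
    obtain ⟨ε, hε, hfar⟩ := hvQ
    obtain ⟨l, hl⟩ := hV v hv
    set K := P ∩ {w | ε ≤ dist v w} with hK
    have hKcomp : IsCompact K :=
      hPcomp.inter_right (isClosed_le continuous_const (continuous_const.dist continuous_id))
    have hQK : Q ⊆ K := fun q hq => ⟨intrinsicInterior_subset (hQ hq), hfar q hq⟩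
    rcases K.eq_empty_or_nonempty with hKe | hKne
    · have hQe : Q = ∅ := Set.eq_empty_of_subset_empty (hKe ▸ hQK)
      rw [hQe, convexHull_empty, closure_empty] at hvcl
      exact hvcl
    · obtain ⟨w₀, hw₀K, hw₀max⟩ := hKcomp.exists_isMaxOn hKne l.continuous.continuousOn
      have hw₀ne : w₀ ≠ v := by
        intro he
        have h2 := hw₀K.2
        rw [he] at h2
        simp only [Set.mem_setOf_eq, dist_self] at h2
        linarith
      have hlt : l w₀ < l v := hl w₀ hw₀K.1 hw₀ne
      have hw₀max : ∀ w ∈ K, l w ≤ l w₀ := hw₀max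
      have hsub : convexHull ℝ Q ⊆ {w | l w ≤ l w₀} :=
        convexHull_min (fun q hq => hw₀max q (hQK hq))
          (convex_halfSpace_le ⟨l.map_add, l.map_smul⟩ _)
      have hclosed : IsClosed {w : EuclideanSpace ℝ (Fin N) | l w ≤ l w₀} :=
        isClosed_le l.continuous continuous_const
      have : l v ≤ l w₀ := (hclosed.closure_subset_iff.mpr hsub) hvcl
      linarith
  · intro h
    have hQP : convexHull ℝ Q ⊆ P :=
      convexHull_min (fun q hq => intrinsicInterior_subset (hQ hq)) hPconv
    have hPQ : P ⊆ closure (convexHull ℝ Q) :=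
      convexHull_min (fun v hv => closure_mono (subset_convexHull ℝ Q) (h v hv))
        (convex_convexHull ℝ Q).closure
    exact rint_subset_of_dense (convex_convexHull ℝ Q) hQP hPQ
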